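/- arXiv:1102.1117 — 3 statements merged into one kernel-verified Lean document; each statement's English description precedes it below -/
import Mathlib

section
/- Let a and b be positive coprime integers. Then in the polynomial ring ℤ[X], the polynomial (X^a − 1)(X^b − 1) divides the polynomial (X^{ab} − 1)(X − 1). -/
open Polynomial

theorem torus_knot_alexander_divisibility (a b : ℕ) (ha : 0 < a) (hb : 0 < b)
    (hab : Nat.Coprime a b) :
    ((X : ℤ[X]) ^ a - 1) * ((X : ℤ[X]) ^ b - 1) ∣
      ((X : ℤ[X]) ^ (a * b) - 1) * ((X : ℤ[X]) - 1) := by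
  have hinter : a.divisors ∩ b.divisors = {1} := by
    ext d
    simp only [Finset.mem_inter, Nat.mem_divisors, Finset.mem_singleton]
    constructor
    · rintro ⟨⟨hda, -⟩, ⟨hdb, -⟩⟩
      exact Nat.eq_one_of_dvd_coprimes hab hda hdb
    · rintro rfl
      exact ⟨⟨one_dvd _, ha.ne'⟩, ⟨one_dvd _, hb.ne'⟩⟩
  rw [← prod_cyclotomic_eq_X_pow_sub_one ha ℤ, ← prod_cyclotomic_eq_X_pow_sub_one hb ℤ,
    ← prod_cyclotomic_eq_X_pow_sub_one (Nat.mul_pos ha hb) ℤ,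
    Finset.prod_union_inter.symm, hinter, Finset.prod_singleton, cyclotomic_one]
  exact mul_dvd_mul_right
    (Finset.prod_dvd_prod_of_subset _ _ _ (by
      intro d hd
      simp only [Finset.mem_union, Nat.mem_divisors] at hd ⊢
      refine ⟨?_, Nat.mul_ne_zero ha.ne' hb.ne'⟩
      rcases hd with h | h
      · exact h.1.trans (dvd_mul_right a b)
      · exact h.1.trans (dvd_mul_left b a))) _
end

section
/- Let G be a group and let s₁, s₂, s₃ ∈ G satisfy the braid relations of the 4-strand braid group: s₁s₂s₁ = s₂s₁s₂, s₂s₃s₂ = s₃s₂s₃, and s₁s₃ = s₃s₁. Set w = s₂s₃s₁s₂. Then for every odd integer q and all integers p and m, the element w^q · (s₂s₃²s₂)^p · s₁^m is conjugate in G to the element (s₁s₂s₃)^4 · w^{q−2} · (s₂s₃²s₂)^p · s₁^{m−4}. -/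
theorem braid_conjugate_full_twist_form {G : Type*} [Group G] (s₁ s₂ s₃ : G)
    (h12 : s₁ * s₂ * s₁ = s₂ * s₁ * s₂)
    (h23 : s₂ * s₃ * s₂ = s₃ * s₂ * s₃)
    (h13 : s₁ * s₃ = s₃ * s₁)
    (q p m : ℤ) (hq : Odd q) :
    IsConj ((s₂ * s₃ * s₁ * s₂) ^ q * (s₂ * s₃ ^ 2 * s₂) ^ p * s₁ ^ m)
      ((s₁ * s₂ * s₃) ^ 4 * (s₂ * s₃ * s₁ * s₂) ^ (q - 2) *
        (s₂ * s₃ ^ 2 * s₂) ^ p * s₁ ^ (m - 4)) := by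
  set w := s₂ * s₃ * s₁ * s₂ with hwdef
  set t := s₂ * s₃ ^ 2 * s₂ with htdef
  obtain ⟨k, hk⟩ := hq
  -- basic word identities
  have hw1 : w * s₁ = s₃ * w := by
    calc w * s₁ = s₂ * s₃ * (s₁ * s₂ * s₁) := by rw [hwdef]; group
      _ = s₂ * s₃ * (s₂ * s₁ * s₂) := by rw [h12]
      _ = (s₂ * s₃ * s₂) * (s₁ * s₂) := by group
      _ = (s₃ * s₂ * s₃) * (s₁ * s₂) := by rw [h23]
      _ = s₃ * w := by rw [hwdef]; group
  have hw3 : w * s₃ = s₁ * w := by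
    calc w * s₃ = s₂ * (s₃ * s₁) * (s₂ * s₃) := by rw [hwdef]; group
      _ = s₂ * (s₁ * s₃) * (s₂ * s₃) := by rw [← h13]
      _ = s₂ * s₁ * (s₃ * s₂ * s₃) := by group
      _ = s₂ * s₁ * (s₂ * s₃ * s₂) := by rw [← h23]
      _ = (s₂ * s₁ * s₂) * (s₃ * s₂) := by group
      _ = (s₁ * s₂ * s₁) * (s₃ * s₂) := by rw [← h12]
      _ = s₁ * s₂ * (s₁ * s₃) * s₂ := by group
      _ = s₁ * s₂ * (s₃ * s₁) * s₂ := by rw [h13]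
      _ = s₁ * w := by rw [hwdef]; group
  -- w*w commutes with s₁ and s₃
  have hc1 : w * w * s₁ = s₁ * (w * w) := by
    rw [mul_assoc, hw1, ← mul_assoc, hw3, mul_assoc]
  have hc3 : w * w * s₃ = s₃ * (w * w) := by
    rw [mul_assoc, hw3, ← mul_assoc, hw1, mul_assoc]
  have hC1 : Commute (w * w) s₁ := hc1
  have hC3 : Commute (w * w) s₃ := hc3
  -- odd powers of w swap s₁ and s₃
  have hodd : ∀ j : ℤ, w ^ (2 * j + 1) * s₁ = s₃ * w ^ (2 * j + 1) ∧
      w ^ (2 * j + 1) * s₃ = s₁ * w ^ (2 * j + 1) := by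
    intro j
    have hsplit : w ^ (2 * j + 1) = (w * w) ^ j * w := by
      rw [zpow_add, zpow_one, zpow_mul, zpow_two]
    constructor
    · rw [hsplit, mul_assoc, hw1, ← mul_assoc, (hC3.zpow_left j).eq, mul_assoc]
    · rw [hsplit, mul_assoc, hw3, ← mul_assoc, (hC1.zpow_left j).eq, mul_assoc]
  have hq1 : SemiconjBy (w ^ q) s₁ s₃ := by rw [hk]; exact (hodd k).1
  have hq3 : SemiconjBy (w ^ q) s₃ s₁ := by rw [hk]; exact (hodd k).2
  have hk2 : q - 2 = 2 * (k - 1) + 1 := by omega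
  have hq1' : SemiconjBy (w ^ (q - 2)) s₁ s₃ := by rw [hk2]; exact (hodd (k - 1)).1
  have hq3' : SemiconjBy (w ^ (q - 2)) s₃ s₁ := by rw [hk2]; exact (hodd (k - 1)).2
  -- s₃² commutes with t, hence with t^p
  have hEt : s₃ * s₃ * t = t * (s₃ * s₃) := by
    calc s₃ * s₃ * t = s₃ * (s₃ * s₂ * s₃) * (s₃ * s₂) := by rw [htdef, pow_two]; group
      _ = s₃ * (s₂ * s₃ * s₂) * (s₃ * s₂) := by rw [← h23]
      _ = (s₃ * s₂ * s₃) * (s₂ * s₃ * s₂) := by group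
      _ = (s₂ * s₃ * s₂) * (s₃ * s₂ * s₃) := by rw [h23]
      _ = s₂ * s₃ * (s₂ * s₃ * s₂) * s₃ := by group
      _ = s₂ * s₃ * (s₃ * s₂ * s₃) * s₃ := by rw [h23]
      _ = t * (s₃ * s₃) := by rw [htdef, pow_two]; group
  have hCt : Commute (s₃ * s₃) t := hEt
  have hEtp : s₃ * s₃ * t ^ p = t ^ p * (s₃ * s₃) := (hCt.zpow_right p).eq
  have hC31 : Commute s₃ s₁ := h13.symm
  -- commuting blocks of s₁'s and s₃'s
  have hc2 : Commute (s₃ * s₃) s₁ := hC31.mul_left hC31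
  have hc41s : Commute (s₃ * s₃ * s₃ * s₃) s₁ := (hc2.mul_left hC31).mul_left hC31
  have hc41 : Commute (s₃ * s₃ * s₃ * s₃) (s₁ * s₁) := hc41s.mul_right hc41s
  have hc4m : Commute (s₃ * s₃ * s₃ * s₃) (s₁ ^ m) := hc41s.zpow_right m
  have hc21 : Commute (s₃ * s₃) (s₁ * s₁) := hc2.mul_right hc2
  have hc14 : Commute (s₃ * s₃) (s₁ * s₁ * s₁ * s₁) :=
    ((hc2.mul_right hc2).mul_right hc2).mul_right hc2
  have hcinv : Commute (s₃ * s₃) ((s₁ * s₁ * s₁ * s₁)⁻¹) := hc14.inv_right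
  have hc2m4 : Commute (s₃ * s₃) (s₁ ^ (m - 4)) := hc2.zpow_right (m - 4)
  -- the full twist (s₁ s₂ s₃)^4 = w² s₁² s₃²
  have hCc : Commute (w * w) (s₁ * s₁ * (s₃ * s₃)) :=
    (hC1.mul_right hC1).mul_right (hC3.mul_right hC3)
  have hc4 : (s₁ * s₂ * s₃) ^ 4 = w * w * (s₁ * s₁ * (s₃ * s₃)) := by
    have h2 : (s₁ * s₂ * s₃) * (s₁ * s₂ * s₃) = s₁ * w * s₃ := by rw [hwdef]; group
    calc (s₁ * s₂ * s₃) ^ 4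
        = ((s₁ * s₂ * s₃) * (s₁ * s₂ * s₃)) * ((s₁ * s₂ * s₃) * (s₁ * s₂ * s₃)) := by
          rw [pow_succ, pow_succ, pow_succ, pow_one]; group
      _ = (s₁ * w * s₃) * (s₁ * w * s₃) := by rw [h2]
      _ = s₁ * w * (s₃ * s₁) * (w * s₃) := by group
      _ = s₁ * w * (s₁ * s₃) * (w * s₃) := by rw [← h13]
      _ = s₁ * (w * s₁) * (s₃ * (w * s₃)) := by group
      _ = s₁ * (s₃ * w) * (s₃ * (s₁ * w)) := by rw [hw1, hw3]
      _ = s₁ * s₃ * (w * s₃) * (s₁ * w) := by group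
      _ = s₁ * s₃ * (s₁ * w) * (s₁ * w) := by rw [hw3]
      _ = s₁ * s₃ * s₁ * (w * s₁) * w := by group
      _ = s₁ * s₃ * s₁ * (s₃ * w) * w := by rw [hw1]
      _ = s₁ * (s₃ * s₁) * s₃ * (w * w) := by group
      _ = s₁ * (s₁ * s₃) * s₃ * (w * w) := by rw [← h13]
      _ = s₁ * s₁ * (s₃ * s₃) * (w * w) := by group
      _ = w * w * (s₁ * s₁ * (s₃ * s₃)) := by rw [hCc.eq]
  -- semiconjugation of letter blocks by odd powers of w
  have hS : SemiconjBy (w ^ q) (s₃ * s₃ * s₃ * s₃ * (s₁ * s₁)) (s₁ * s₁ * s₁ * s₁ * (s₃ * s₃)) :=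
    (((hq3.mul_right hq3).mul_right hq3).mul_right hq3).mul_right (hq1.mul_right hq1)
  have hS' : SemiconjBy (w ^ (q - 2)) (s₃ * s₃ * (s₁ * s₁)) (s₁ * s₁ * (s₃ * s₃)) :=
    (hq3'.mul_right hq3').mul_right (hq1'.mul_right hq1')
  rw [isConj_iff]
  refine ⟨s₁ * s₁ * s₁ * s₁ * (s₃ * s₃), ?_⟩
  have hL : (s₁ * s₁ * s₁ * s₁ * (s₃ * s₃)) * (w ^ q * t ^ p * s₁ ^ m) *
      (s₁ * s₁ * s₁ * s₁ * (s₃ * s₃))⁻¹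
      = w ^ q * (s₁ * (s₁ * (t ^ p * (s₁ ^ (m - 4) * (s₃ * s₃))))) := by
    calc (s₁ * s₁ * s₁ * s₁ * (s₃ * s₃)) * (w ^ q * t ^ p * s₁ ^ m) *
        (s₁ * s₁ * s₁ * s₁ * (s₃ * s₃))⁻¹
        = (s₁ * s₁ * s₁ * s₁ * (s₃ * s₃)) * w ^ q *
            (t ^ p * (s₁ ^ m * (s₁ * s₁ * s₁ * s₁ * (s₃ * s₃))⁻¹)) := by group
      _ = w ^ q * (s₃ * s₃ * s₃ * s₃ * (s₁ * s₁)) *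
            (t ^ p * (s₁ ^ m * (s₁ * s₁ * s₁ * s₁ * (s₃ * s₃))⁻¹)) := by rw [← hS.eq]
      _ = w ^ q * ((s₃ * s₃ * s₃ * s₃) * (s₁ * s₁)) * t ^ p *
            (s₁ ^ m * (s₁ * s₁ * s₁ * s₁ * (s₃ * s₃))⁻¹) := by group
      _ = w ^ q * ((s₁ * s₁) * (s₃ * s₃ * s₃ * s₃)) * t ^ p *
            (s₁ ^ m * (s₁ * s₁ * s₁ * s₁ * (s₃ * s₃))⁻¹) := by rw [hc41.eq]
      _ = w ^ q * (s₁ * (s₁ * ((s₃ * s₃) * ((s₃ * s₃) * t ^ p)))) *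
            (s₁ ^ m * (s₁ * s₁ * s₁ * s₁ * (s₃ * s₃))⁻¹) := by group
      _ = w ^ q * (s₁ * (s₁ * ((s₃ * s₃) * (t ^ p * (s₃ * s₃))))) *
            (s₁ ^ m * (s₁ * s₁ * s₁ * s₁ * (s₃ * s₃))⁻¹) := by rw [hEtp]
      _ = w ^ q * (s₁ * (s₁ * ((s₃ * s₃) * t ^ p))) *
            ((s₃ * s₃) * (s₁ ^ m * (s₁ * s₁ * s₁ * s₁ * (s₃ * s₃))⁻¹)) := by group
      _ = w ^ q * (s₁ * (s₁ * (t ^ p * (s₃ * s₃)))) *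
            ((s₃ * s₃) * (s₁ ^ m * (s₁ * s₁ * s₁ * s₁ * (s₃ * s₃))⁻¹)) := by rw [hEtp]
      _ = w ^ q * (s₁ * (s₁ * t ^ p)) *
            ((s₃ * s₃ * s₃ * s₃) * s₁ ^ m * (s₁ * s₁ * s₁ * s₁ * (s₃ * s₃))⁻¹) := by group
      _ = w ^ q * (s₁ * (s₁ * t ^ p)) *
            (s₁ ^ m * (s₃ * s₃ * s₃ * s₃) * (s₁ * s₁ * s₁ * s₁ * (s₃ * s₃))⁻¹) := by
          rw [hc4m.eq]
      _ = w ^ q * (s₁ * (s₁ * t ^ p)) *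
            (s₁ ^ m * ((s₃ * s₃) * (s₁ * s₁ * s₁ * s₁)⁻¹)) := by group; rw [zpow_two]; group
      _ = w ^ q * (s₁ * (s₁ * t ^ p)) *
            (s₁ ^ m * ((s₁ * s₁ * s₁ * s₁)⁻¹ * (s₃ * s₃))) := by rw [hcinv.eq]
      _ = w ^ q * (s₁ * (s₁ * (t ^ p * (s₁ ^ (m - 4) * (s₃ * s₃))))) := by group
  have hR : (s₁ * s₂ * s₃) ^ 4 * w ^ (q - 2) * t ^ p * s₁ ^ (m - 4)
      = w ^ q * (s₁ * (s₁ * (t ^ p * (s₁ ^ (m - 4) * (s₃ * s₃))))) := by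
    calc (s₁ * s₂ * s₃) ^ 4 * w ^ (q - 2) * t ^ p * s₁ ^ (m - 4)
        = (w * w * (s₁ * s₁ * (s₃ * s₃))) * w ^ (q - 2) * t ^ p * s₁ ^ (m - 4) := by rw [hc4]
      _ = w * w * ((s₁ * s₁ * (s₃ * s₃)) * w ^ (q - 2)) * t ^ p * s₁ ^ (m - 4) := by group
      _ = w * w * (w ^ (q - 2) * (s₃ * s₃ * (s₁ * s₁))) * t ^ p * s₁ ^ (m - 4) := by
          rw [← hS'.eq]
      _ = w ^ q * ((s₃ * s₃) * (s₁ * s₁)) * t ^ p * s₁ ^ (m - 4) := by group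
      _ = w ^ q * ((s₁ * s₁) * (s₃ * s₃)) * t ^ p * s₁ ^ (m - 4) := by rw [hc21.eq]
      _ = w ^ q * (s₁ * (s₁ * ((s₃ * s₃) * t ^ p))) * s₁ ^ (m - 4) := by group
      _ = w ^ q * (s₁ * (s₁ * (t ^ p * (s₃ * s₃)))) * s₁ ^ (m - 4) := by rw [hEtp]
      _ = w ^ q * (s₁ * (s₁ * t ^ p)) * ((s₃ * s₃) * s₁ ^ (m - 4)) := by group
      _ = w ^ q * (s₁ * (s₁ * t ^ p)) * (s₁ ^ (m - 4) * (s₃ * s₃)) := by rw [hc2m4.eq]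
      _ = w ^ q * (s₁ * (s₁ * (t ^ p * (s₁ ^ (m - 4) * (s₃ * s₃))))) := by group
  exact hL.trans hR.symm
end

section
/- Let G be a group and let s₁, s₂, s₃ ∈ G satisfy the braid relations of the 4-strand braid group: s₁s₂s₁ = s₂s₁s₂, s₂s₃s₂ = s₃s₂s₃, and s₁s₃ = s₃s₁. Set w = s₂s₃s₁s₂. Then s₁⁴ · w^q = w · s₃⁴ · w^{q−1} for every integer q, and, when q is odd, s₁⁴ · w^q = w · s₃² · w^{q−1} · s₃². -/
theorem braid_rewriting_steps {G : Type*} [Group G] (s₁ s₂ s₃ : G)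
    (h12 : s₁ * s₂ * s₁ = s₂ * s₁ * s₂)
    (h23 : s₂ * s₃ * s₂ = s₃ * s₂ * s₃)
    (h13 : s₁ * s₃ = s₃ * s₁) :
    (∀ q : ℤ, s₁ ^ 4 * (s₂ * s₃ * s₁ * s₂) ^ q =
        (s₂ * s₃ * s₁ * s₂) * s₃ ^ 4 * (s₂ * s₃ * s₁ * s₂) ^ (q - 1)) ∧
      (∀ q : ℤ, Odd q → s₁ ^ 4 * (s₂ * s₃ * s₁ * s₂) ^ q =
        (s₂ * s₃ * s₁ * s₂) * s₃ ^ 2 * (s₂ * s₃ * s₁ * s₂) ^ (q - 1) * s₃ ^ 2) := by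
  set w := s₂ * s₃ * s₁ * s₂ with hw
  have hw1 : s₁ * w = w * s₃ := by
    calc s₁ * w = s₁ * s₂ * (s₃ * s₁) * s₂ := by rw [hw]; group
    _ = s₁ * s₂ * s₁ * (s₃ * s₂) := by rw [← h13]; group
    _ = s₂ * s₁ * (s₂ * s₃ * s₂) := by rw [h12]; group
    _ = s₂ * (s₁ * s₃) * (s₂ * s₃) := by rw [h23]; group
    _ = w * s₃ := by rw [h13, hw]; group
  have hw3 : s₃ * w = w * s₁ := by
    calc s₃ * w = (s₃ * s₂ * s₃) * s₁ * s₂ := by rw [hw]; group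
    _ = s₂ * s₃ * (s₂ * s₁ * s₂) := by rw [← h23]; group
    _ = w * s₁ := by rw [← h12, hw]; group
  have hsc : SemiconjBy w s₃ s₁ := hw1.symm
  have hsc4 : w * s₃ ^ 4 = s₁ ^ 4 * w := (hsc.pow_right 4)
  have hc : Commute s₃ (w ^ 2) := by
    show s₃ * w ^ 2 = w ^ 2 * s₃
    calc s₃ * w ^ 2 = (s₃ * w) * w := by rw [sq]; group
    _ = w * (s₁ * w) := by rw [hw3]; group
    _ = w ^ 2 * s₃ := by rw [hw1, sq]; group
  have first : ∀ q : ℤ, s₁ ^ 4 * w ^ q = w * s₃ ^ 4 * w ^ (q - 1) := by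
    intro q
    have hsplit : w ^ q = w * w ^ (q - 1) := by
      rw [← zpow_one_add]; ring_nf
    rw [hsplit, ← mul_assoc, ← hsc4, mul_assoc, mul_assoc]
  refine ⟨first, fun q hq => ?_⟩
  obtain ⟨k, hk⟩ := hq
  have hq1 : q - 1 = 2 * k := by omega
  have hcz : s₃ ^ 2 * w ^ (q - 1) = w ^ (q - 1) * s₃ ^ 2 := by
    have h2 : Commute (s₃ ^ 2) (w ^ (q - 1)) := by
      rw [hq1, zpow_mul]
      norm_cast
      exact ((hc.pow_left 2).zpow_right k)
    exact h2
  calc s₁ ^ 4 * w ^ q = w * s₃ ^ 4 * w ^ (q - 1) := first q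
  _ = w * s₃ ^ 2 * (s₃ ^ 2 * w ^ (q - 1)) := by group
  _ = w * s₃ ^ 2 * w ^ (q - 1) * s₃ ^ 2 := by rw [hcz]; group
end
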